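/- Let H be a finite-dimensional complex inner product space, let U and O be unitaries on H, and let P be an orthogonal projection on H such that O v = v for every vector v with P v = 0. Then for every unit vector Ψ ∈ H and every integer q ≥ 0: √(1 − |⟨(U O)^q U Ψ, U^{q+1} Ψ⟩|²) ≤ 2 · Σ_{i=1}^{q} ‖P U^i Ψ‖. -/

import Mathlib

open scoped ComplexOrder

lemma sqrt_one_sub_abs_inner_sq_le {E : Type*} [NormedAddCommGroup E]
    [InnerProductSpace ℂ E] (u v : E) (hu : ‖u‖ = 1) (hv : ‖v‖ = 1) :
    Real.sqrt (1 - ‖(inner ℂ u v : ℂ)‖ ^ 2) ≤ ‖u - v‖ := by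
  set t := ‖(inner ℂ u v : ℂ)‖ with ht
  have ht0 : 0 ≤ t := norm_nonneg _
  have ht1 : t ≤ 1 := by
    have := norm_inner_le_norm (𝕜 := ℂ) u v
    simpa [hu, hv, ht] using this
  have hre : (inner ℂ u v : ℂ).re ≤ t := Complex.re_le_norm _
  have hsq : ‖u - v‖ ^ 2 = 2 - 2 * (inner ℂ u v : ℂ).re := by
    have h := @norm_sub_sq ℂ E _ _ _ u v
    rw [hu, hv, RCLike.re_to_complex] at h
    rw [h]; ring
  have key : 1 - t ^ 2 ≤ ‖u - v‖ ^ 2 := by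
    have : 1 - t ^ 2 ≤ 2 - 2 * t := by nlinarith
    nlinarith
  calc Real.sqrt (1 - t ^ 2) ≤ Real.sqrt (‖u - v‖ ^ 2) := Real.sqrt_le_sqrt key
    _ = ‖u - v‖ := Real.sqrt_sq (norm_nonneg _)

theorem stmt7 {E : Type*} [NormedAddCommGroup E] [InnerProductSpace ℂ E]
    [FiniteDimensional ℂ E]
    (U O : E ≃ₗᵢ[ℂ] E) (P : E →ₗ[ℂ] E) (hPP : P ∘ₗ P = P)
    (hPsa : ∀ x y, (inner ℂ (P x) y : ℂ) = inner ℂ x (P y))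
    (hO : ∀ v, P v = 0 → O v = v)
    (Ψ : E) (hΨ : ‖Ψ‖ = 1) (q : ℕ) :
    Real.sqrt (1 - ‖(inner ℂ ((fun w => U (O w))^[q] (U Ψ)) ((⇑U)^[q + 1] Ψ) : ℂ)‖ ^ 2)
      ≤ 2 * ∑ i ∈ Finset.Icc 1 q, ‖P ((⇑U)^[i] Ψ)‖ := by
  -- O moves any vector by at most 2‖P w‖
  have hOdist : ∀ w : E, ‖O w - w‖ ≤ 2 * ‖P w‖ := by
    intro w
    have hker : P (w - P w) = 0 := by
      have h := LinearMap.congr_fun hPP w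
      simp only [LinearMap.coe_comp, Function.comp_apply] at h
      simp [map_sub, h]
    have hfix : O (w - P w) = w - P w := hO _ hker
    have : O w - w = O (P w) - P w := by
      have h1 : O w = O (P w) + (w - P w) := by
        rw [← hfix, ← map_add]; congr 1; abel
      rw [h1]; abel
    rw [this]
    calc ‖O (P w) - P w‖ ≤ ‖O (P w)‖ + ‖P w‖ := norm_sub_le _ _
      _ = 2 * ‖P w‖ := by rw [O.norm_map]; ring
  -- norms preserved
  have hUn : ∀ n : ℕ, ‖(⇑U)^[n] Ψ‖ = 1 := by
    intro n; induction n with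
    | zero => simpa using hΨ
    | succ n ih => rw [Function.iterate_succ_apply']; rw [U.norm_map]; exact ih
  have hfn : ∀ n : ℕ, ‖(fun w => U (O w))^[n] (U Ψ)‖ = 1 := by
    intro n; induction n with
    | zero => simpa [U.norm_map] using hΨ
    | succ n ih => rw [Function.iterate_succ_apply']; simp [U.norm_map, O.norm_map, ih]
  -- hybrid bound
  have hyb : ∀ n : ℕ, ‖(fun w => U (O w))^[n] (U Ψ) - (⇑U)^[n + 1] Ψ‖
      ≤ 2 * ∑ i ∈ Finset.Icc 1 n, ‖P ((⇑U)^[i] Ψ)‖ := by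
    intro n; induction n with
    | zero => simp [Function.iterate_one]
    | succ n ih =>
      rw [Function.iterate_succ_apply' (fun w => U (O w)),
        Function.iterate_succ_apply' (⇑U) (n + 1)]
      set a := (fun w => U (O w))^[n] (U Ψ)
      set b := (⇑U)^[n + 1] Ψ
      have h1 : ‖U (O a) - U b‖ = ‖O a - b‖ := by
        rw [← map_sub, U.norm_map]
      have h2 : ‖O a - b‖ ≤ ‖O a - O b‖ + ‖O b - b‖ := by
        have : O a - b = (O a - O b) + (O b - b) := by abel
        rw [this]; exact norm_add_le _ _
      have h3 : ‖O a - O b‖ = ‖a - b‖ := by rw [← map_sub, O.norm_map]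
      have h4 := hOdist b
      have hsum : ∑ i ∈ Finset.Icc 1 (n + 1), ‖P ((⇑U)^[i] Ψ)‖
          = (∑ i ∈ Finset.Icc 1 n, ‖P ((⇑U)^[i] Ψ)‖) + ‖P ((⇑U)^[n + 1] Ψ)‖ := by
        rw [← Finset.sum_Icc_succ_top (by omega : 1 ≤ n + 1)]
      rw [h1, hsum]
      calc ‖O a - b‖ ≤ ‖a - b‖ + ‖O b - b‖ := by rw [← h3]; exact h2
        _ ≤ 2 * ∑ i ∈ Finset.Icc 1 n, ‖P ((⇑U)^[i] Ψ)‖ + 2 * ‖P ((⇑U)^[n + 1] Ψ)‖ :=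
          add_le_add ih h4
        _ = 2 * ((∑ i ∈ Finset.Icc 1 n, ‖P ((⇑U)^[i] Ψ)‖) + ‖P ((⇑U)^[n + 1] Ψ)‖) := by ring
  calc Real.sqrt (1 - ‖(inner ℂ ((fun w => U (O w))^[q] (U Ψ)) ((⇑U)^[q + 1] Ψ) : ℂ)‖ ^ 2)
      ≤ ‖(fun w => U (O w))^[q] (U Ψ) - (⇑U)^[q + 1] Ψ‖ :=
        sqrt_one_sub_abs_inner_sq_le _ _ (hfn q) (hUn (q + 1))
    _ ≤ 2 * ∑ i ∈ Finset.Icc 1 q, ‖P ((⇑U)^[i] Ψ)‖ := hyb q
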